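/- arXiv:1008.3049 — 3 statements merged into one kernel-verified Lean document; each statement's English description precedes it below -/
import Mathlib

section
/- For every integer n ≥ 1, the probabilities p_{n,k} = C(n,k) · k^{k-1} (n-k)^{n-k-1} / (2(n-1) n^{n-2}) for 1 ≤ k ≤ n-1 sum to 1, i.e., ∑_{k=1}^{n-1} C(n,k) k^{k-1} (n-k)^{n-k-1} = 2(n-1) n^{n-2}, for all n ≥ 2. -/
open Polynomial Finset

namespace CayleyAux

variable {A : Type*} [CommRing A]

abbrev SS : Type := Polynomial ℤ
abbrev RR : Type := Polynomial SS

noncomputable def aP : ℕ → SS := fun k => if k = 0 then 1 else X * (X + (k:SS))^(k-1)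

variable {A : Type*} [CommRing A]

lemma Drec (n : ℕ) (f : ℕ → A) :
    ∑ k ∈ range (n+2), (-1:A)^k * ((n+1).choose k) * f k
      = ∑ k ∈ range (n+1), (-1:A)^k * (n.choose k) * f k
        - ∑ k ∈ range (n+1), (-1:A)^k * (n.choose k) * f (k+1) := by
  have key : ∀ k, (-1:A)^(k+1) * ((n+1).choose (k+1)) * f (k+1)
      = -((-1)^k * (n.choose k) * f (k+1)) + -((-1)^k * (n.choose (k+1)) * f (k+1)) := by
    intro k; rw [Nat.choose_succ_succ]; push_cast; ring
  rw [Finset.sum_range_succ' (fun k => (-1:A)^k * ((n+1).choose k) * f k) (n+1)]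
  simp only [key]
  rw [Finset.sum_add_distrib]
  have h2 : ∑ k ∈ range (n+1), -((-1:A)^k * (n.choose (k+1)) * f (k+1))
      = ∑ k ∈ range n, -((-1:A)^k * (n.choose (k+1)) * f (k+1)) := by
    rw [Finset.sum_range_succ, Nat.choose_succ_self]; simp
  have h3 : ∑ k ∈ range (n+1), (-1:A)^k * (n.choose k) * f k
      = ∑ k ∈ range n, (-1:A)^(k+1) * (n.choose (k+1)) * f (k+1) + (-1:A)^0 * (n.choose 0) * f 0 :=
    Finset.sum_range_succ' _ n
  have h4 : ∑ k ∈ range n, -((-1:A)^k * (n.choose (k+1)) * f (k+1))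
      = ∑ k ∈ range n, (-1:A)^(k+1) * (n.choose (k+1)) * f (k+1) :=
    Finset.sum_congr rfl (fun k _ => by ring)
  have h5 : ∑ k ∈ range (n+1), -((-1:A)^k * (n.choose k) * f (k+1))
      = - ∑ k ∈ range (n+1), (-1:A)^k * (n.choose k) * f (k+1) := by
    rw [Finset.sum_neg_distrib]
  rw [h2, h4, h3, h5]
  simp only [Nat.choose_zero_right, Nat.cast_one]
  ring

variable {A : Type*} [CommRing A]


lemma Dmono : ∀ (n i : ℕ), i < n →
    ∑ k ∈ range (n+1), (-1:A)^k * (n.choose k) * (k:A)^i = 0 := by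
  intro n
  induction n with
  | zero => omega
  | succ n ih =>
    intro i hi
    rw [Drec n (fun k => (k:A)^i)]
    have expand : ∀ k : ℕ, ((k:A)+1)^i = ∑ j ∈ range (i+1), (i.choose j : A) * (k:A)^j := by
      intro k
      rw [add_pow]
      exact Finset.sum_congr rfl (fun j _ => by rw [one_pow]; ring)
    have h1 : ∑ k ∈ range (n+1), (-1:A)^k * (n.choose k) * ((k:A)+1)^i
        = ∑ j ∈ range (i+1), (i.choose j : A) *
            ∑ k ∈ range (n+1), (-1:A)^k * (n.choose k) * (k:A)^j := by
      simp only [expand, Finset.mul_sum]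
      rw [Finset.sum_comm]
      refine Finset.sum_congr rfl (fun j _ => Finset.sum_congr rfl (fun k _ => by ring))
    have h2 : ∀ j ∈ range (i+1), (i.choose j : A) *
        ∑ k ∈ range (n+1), (-1:A)^k * (n.choose k) * (k:A)^j
        = if j = i then (i.choose j : A) * ∑ k ∈ range (n+1), (-1:A)^k * (n.choose k) * (k:A)^j else 0 := by
      intro j hj
      rcases eq_or_ne j i with h | h
      · simp [h]
      · rw [if_neg h, ih j (by simp at hj; omega), mul_zero]
    simp only [Nat.cast_add, Nat.cast_one] at h1 ⊢
    rw [h1, Finset.sum_congr rfl h2, Finset.sum_ite_eq' (range (i+1)) i]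
    simp



lemma Dpoly (m : ℕ) :
    ∑ k ∈ range (m+2), (-1:SS)^k * (((m+1).choose k : SS)) * (X + (k:SS))^m = 0 := by
  have expand : ∀ k : ℕ, ((X:SS) + (k:SS))^m
      = ∑ i ∈ range (m+1), (m.choose i : SS) * X^i * (k:SS)^(m-i) := by
    intro k
    rw [add_pow]
    exact Finset.sum_congr rfl (fun i _ => by ring)
  simp only [expand, Finset.mul_sum]
  rw [Finset.sum_comm]
  refine Finset.sum_eq_zero (fun i hi => ?_)
  have h0 : ∑ k ∈ range (m+2), (-1:SS)^k * (((m+1).choose k : SS)) * (k:SS)^(m-i) = 0 :=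
    Dmono (m+1) (m-i) (by omega)
  calc ∑ k ∈ range (m+2), (-1:SS)^k * ((m+1).choose k : SS) * (↑(m.choose i) * X^i * (k:SS)^(m-i))
      = (↑(m.choose i) * X^i) * ∑ k ∈ range (m+2), (-1:SS)^k * ((m+1).choose k : SS) * (k:SS)^(m-i) := by
        rw [Finset.mul_sum]; exact Finset.sum_congr rfl (fun k _ => by ring)
    _ = 0 := by rw [h0, mul_zero]




lemma eval_vanish (m : ℕ) :
    ∑ k ∈ range (m+2), (((m+1).choose k : SS)) * aP k * (-(X + (k:SS)))^(m+1-k) = 0 := by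
  have term : ∀ k ∈ range (m+2), (((m+1).choose k : SS)) * aP k * (-(X + (k:SS)))^(m+1-k)
      = ((-1:SS)^(m+1) * X) * ((-1:SS)^k * (((m+1).choose k : SS)) * (X + (k:SS))^m) := by
    intro k hk
    have hk' : k ≤ m+1 := by simp at hk; omega
    have hs : (-1:SS)^(m+1-k) * (-1:SS)^k = (-1:SS)^(m+1) := by
      rw [← pow_add, Nat.sub_add_cancel hk']
    have hneg : (-(X + (k:SS)))^(m+1-k) = (-1:SS)^(m+1-k) * (X + (k:SS))^(m+1-k) := by
      rw [neg_pow]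
    rcases Nat.eq_zero_or_pos k with h0 | hpos
    · subst h0
      have e1 : aP 0 = 1 := rfl
      rw [e1, hneg, mul_one]
      simp only [Nat.cast_zero, add_zero, Nat.sub_zero, pow_zero]
      ring
    · obtain ⟨j, rfl⟩ : ∃ j, k = j+1 := ⟨k-1, by omega⟩
      have e1 : aP (j+1) = X * (X + ((j+1:ℕ):SS))^j := by
        simp only [aP, if_neg (Nat.succ_ne_zero j), Nat.add_sub_cancel]
      have hpow : (X + ((j+1:ℕ):SS))^j * (X + ((j+1:ℕ):SS))^(m+1-(j+1)) = (X + ((j+1:ℕ):SS))^m := by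
        rw [← pow_add]; congr 1; omega
      have heven : ((-1:SS)^(j+1)) * ((-1:SS)^(j+1)) = 1 := by
        rw [← pow_add]; exact Even.neg_one_pow ⟨j+1, rfl⟩
      rw [e1, hneg]
      calc (((m+1).choose (j+1) : SS)) * (X * (X + ((j+1:ℕ):SS))^j) * ((-1:SS)^(m+1-(j+1)) * (X + ((j+1:ℕ):SS))^(m+1-(j+1)))
          = (((-1:SS)^(j+1)) * ((-1:SS)^(j+1))) * ((((m+1).choose (j+1) : SS)) * (X * (X + ((j+1:ℕ):SS))^j) * ((-1:SS)^(m+1-(j+1)) * (X + ((j+1:ℕ):SS))^(m+1-(j+1)))) := by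
            rw [heven, one_mul]
        _ = ((-1:SS)^(m+1-(j+1)) * (-1:SS)^(j+1)) * ((X + ((j+1:ℕ):SS))^j * (X + ((j+1:ℕ):SS))^(m+1-(j+1))) * ((-1:SS)^(j+1) * (((m+1).choose (j+1) : SS)) * X) := by
            ring
        _ = ((-1:SS)^(m+1)) * ((X + ((j+1:ℕ):SS))^m) * ((-1:SS)^(j+1) * (((m+1).choose (j+1) : SS)) * X) := by
            rw [hs, hpow]
        _ = ((-1:SS)^(m+1) * X) * ((-1:SS)^(j+1) * (((m+1).choose (j+1) : SS)) * (X + ((j+1:ℕ):SS))^m) := by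
            ring
  rw [Finset.sum_congr rfl term, ← Finset.mul_sum, Dpoly m, mul_zero]




lemma choose_sub_mul (n k : ℕ) : (n+1-k) * ((n+1).choose k) = (n+1) * (n.choose k) := by
  rcases le_or_gt k n with h | h
  · have h1 := Nat.choose_succ_right_eq (n+1) k
    have h2 := Nat.add_one_mul_choose_eq n k
    rw [h2, h1, Nat.mul_comm]
  · rcases Nat.lt_or_ge n (k-1) with h' | h'
    · rw [Nat.choose_eq_zero_of_lt (by omega), Nat.choose_eq_zero_of_lt (by omega)]; simp
    · have hk : k = n+1 := by omega
      subst hk; simp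

lemma abelA : ∀ (n : ℕ) (c : SS),
    ∑ k ∈ range (n+1), ((n.choose k : RR)) * C (aP k) * (X + C c + ((n-k : ℕ) : RR))^(n-k)
      = (X + C c + C X + (n : RR))^n := by
  intro n
  induction n with
  | zero => intro c; simp [aP]
  | succ n ih =>
    intro c
    set L : RR := ∑ k ∈ range (n+2), (((n+1).choose k : RR)) * C (aP k) * (X + C c + (((n+1)-k : ℕ) : RR))^((n+1)-k) with hL
    set Rh : RR := (X + C c + C X + ((n+1) : RR))^(n+1) with hR
    have hder : derivative (L - Rh) = 0 := by
      have dL : derivative L = ∑ k ∈ range (n+2), (((n+1).choose k : RR)) * C (aP k) *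
          ((((n+1)-k : ℕ) : RR) * (X + C c + (((n+1)-k : ℕ) : RR))^((n+1)-k-1)) := by
        rw [hL, derivative_sum]
        refine Finset.sum_congr rfl (fun k _ => ?_)
        rw [derivative_mul, derivative_mul, derivative_pow]
        simp [derivative_natCast, derivative_C, derivative_X]
      have dR : derivative Rh = ((n+1 : ℕ) : RR) * (X + C c + C X + ((n+1) : RR))^n := by
        rw [hR, derivative_pow]
        simp [derivative_natCast, derivative_C, derivative_X]
      have key : ∑ k ∈ range (n+2), (((n+1).choose k : RR)) * C (aP k) *
          ((((n+1)-k : ℕ) : RR) * (X + C c + (((n+1)-k : ℕ) : RR))^((n+1)-k-1))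
          = (((n+1) : ℕ) : RR) * (X + C c + C X + ((n+1) : RR))^(n+1-1) := by
        rw [Finset.sum_range_succ]
        have last0 : (((n+1).choose (n+1) : RR)) * C (aP (n+1)) *
            ((((n+1)-(n+1) : ℕ) : RR) * (X + C c + (((n+1)-(n+1) : ℕ) : RR))^((n+1)-(n+1)-1)) = 0 := by
          simp
        rw [last0, add_zero]
        have termwise : ∀ k ∈ range (n+1), (((n+1).choose k : RR)) * C (aP k) *
            ((((n+1)-k : ℕ) : RR) * (X + C c + (((n+1)-k : ℕ) : RR))^((n+1)-k-1))
            = (((n+1) : ℕ) : RR) * ((n.choose k : RR) * C (aP k) * (X + C (c+1) + ((n-k : ℕ) : RR))^(n-k)) := by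
          intro k hk
          have hkn : k ≤ n := by simp at hk; omega
          have e1 : (n+1)-k-1 = n-k := by omega
          have e2 : (n+1)-k = (n-k)+1 := by omega
          have e3 : (X + C c + ((((n+1)-k : ℕ)) : RR)) = (X + C (c+1) + ((n-k : ℕ) : RR)) := by
            rw [e2, C_add, C_1]
            push_cast
            ring
          have e4 : ((((n+1)-k : ℕ)) : RR) * (((n+1).choose k : RR)) = (((n+1) : ℕ) : RR) * (n.choose k : RR) := by
            rw [← Nat.cast_mul, ← Nat.cast_mul, choose_sub_mul]
          rw [e1, e3]
          calc (((n+1).choose k : RR)) * C (aP k) * (((((n+1)-k : ℕ)) : RR) * (X + C (c+1) + ((n-k : ℕ) : RR))^(n-k))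
              = (((((n+1)-k : ℕ)) : RR) * (((n+1).choose k : RR))) * (C (aP k) * (X + C (c+1) + ((n-k : ℕ) : RR))^(n-k)) := by ring
            _ = ((((n+1) : ℕ) : RR) * (n.choose k : RR)) * (C (aP k) * (X + C (c+1) + ((n-k : ℕ) : RR))^(n-k)) := by rw [e4]
            _ = _ := by ring
        rw [Finset.sum_congr rfl termwise, ← Finset.mul_sum, ih (c+1)]
        have e5 : (X + C (c+1) + C X + (n : RR)) = (X + C c + C X + ((n+1) : RR)) := by
          rw [C_add, C_1]
          ring
        rw [e5]
        norm_num
      rw [derivative_sub, dL, dR, key]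
      simp
    have heval : eval (-(X + c + (((n+1):ℕ) : SS))) (L - Rh) = 0 := by
      rw [eval_sub]
      have hRe : eval (-(X + c + (((n+1):ℕ) : SS))) Rh = 0 := by
        rw [hR]
        simp only [eval_pow, eval_add, eval_X, eval_C, eval_natCast, eval_one]
        have e0 : (-(X + c + (((n+1):ℕ) : SS)) + c + X + ((n:SS) + 1)) = 0 := by push_cast; ring
        rw [e0]
        exact zero_pow (by omega)
      have hLe : eval (-(X + c + (((n+1):ℕ) : SS))) L = 0 := by
        rw [hL, eval_finset_sum]
        have termwise : ∀ k ∈ range (n+2),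
            eval (-(X + c + (((n+1):ℕ) : SS))) ((((n+1).choose k : RR)) * C (aP k) * (X + C c + (((n+1)-k : ℕ) : RR))^((n+1)-k))
            = (((n+1).choose k : SS)) * aP k * (-(X + (k:SS)))^((n+1)-k) := by
          intro k hk
          have hk' : k ≤ n+1 := by simp at hk; omega
          simp only [eval_mul, eval_pow, eval_add, eval_X, eval_C, eval_natCast, eval_neg]
          have e0 : (-(X + c + (((n+1):ℕ) : SS)) + c + (((n+1)-k : ℕ) : SS)) = -(X + (k:SS)) := by
            rw [Nat.cast_sub hk']
            push_cast
            ring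
          rw [e0]
        rw [Finset.sum_congr rfl termwise]
        exact eval_vanish n
      rw [hLe, hRe, sub_zero]
    have hC := Polynomial.eq_C_of_derivative_eq_zero hder
    rw [hC, eval_C] at heval
    have hsub : L - Rh = 0 := by rw [hC, heval, map_zero]
    have final : L = Rh := sub_eq_zero.mp hsub
    rw [hL, hR] at final
    exact_mod_cast final


lemma pow_add_split (t : ℕ) (ht : 1 ≤ t) (u v : A) :
    (u+v)^t = u^t + v^t + u*v*∑ i ∈ Ico 1 t, (t.choose i : A) * u^(i-1) * v^(t-1-i) := by
  rw [add_pow]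
  rw [Finset.range_eq_Ico, Finset.sum_eq_sum_Ico_succ_bot (by omega : 0 < t+1)]
  simp only [zero_add]
  rw [Finset.sum_Ico_succ_top (by omega : 1 ≤ t)]
  simp only [pow_zero, one_mul, Nat.choose_zero_right, Nat.cast_one, Nat.sub_zero, mul_one,
    Nat.choose_self, Nat.sub_self]
  rw [Finset.mul_sum]
  have termwise : ∀ i ∈ Ico 1 t, u^i * v^(t-i) * (t.choose i : A)
      = u*v*((t.choose i : A) * u^(i-1) * v^(t-1-i)) := by
    intro i hi
    simp only [Finset.mem_Ico] at hi
    have e1 : u^i = u * u^(i-1) := by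
      conv_lhs => rw [show i = (i-1)+1 by omega]
      rw [pow_succ]; ring
    have e2 : v^(t-i) = v * v^(t-1-i) := by
      conv_lhs => rw [show t-i = (t-1-i)+1 by omega]
      rw [pow_succ]; ring
    rw [e1, e2]; ring
  rw [Finset.sum_congr rfl termwise]
  ring

lemma hurwitz_split (m : ℕ) :
    (C X * X : RR) * ∑ j ∈ range m, (((m+1).choose (j+1) : RR)) * C ((X+((j+1:ℕ):SS))^j) * (X + ((m-j : ℕ):RR))^(m-j-1)
    = (X + C X + (((m+1):ℕ) : RR))^(m+1) - (((m+1):ℕ):RR) * (X + C X + (((m+1):ℕ):RR))^m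
      - C X * (C X + (((m+1):ℕ):RR))^m - X * (X + (((m+1):ℕ):RR))^m := by
  have hA1 : ∑ k ∈ range (m+2), (((m+1).choose k : RR)) * C (aP k) * (X + (((m+1)-k : ℕ) : RR))^((m+1)-k)
      = (X + C X + (((m+1):ℕ) : RR))^(m+1) := by
    have := abelA (m+1) 0
    simpa only [C_0, add_zero] using this
  have hA2 : ∑ k ∈ range (m+1), ((m.choose k : RR)) * C (aP k) * (X + C 1 + ((m-k : ℕ) : RR))^(m-k)
      = (X + C X + (((m+1):ℕ) : RR))^m := by
    have := abelA m 1
    rw [this]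
    congr 1
    rw [C_1]
    push_cast
    ring
  -- split each term of hA1's sum (k ≤ m)
  have hsplit : ∀ k ∈ range (m+1),
      (((m+1).choose k : RR)) * C (aP k) * (X + (((m+1)-k : ℕ) : RR))^((m+1)-k)
      = (((m+1).choose k : RR)) * C (aP k) * (X + C 1 + ((m-k : ℕ) : RR))^(m-k) * X
        + (((m+1):ℕ):RR) * (((m.choose k : RR)) * C (aP k) * (X + C 1 + ((m-k : ℕ) : RR))^(m-k)) := by
    intro k hk
    have hkm : k ≤ m := by simp at hk; omega
    have e2 : (m+1)-k = (m-k)+1 := by omega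
    have e3 : ((((m+1)-k : ℕ)) : RR) = ((m-k : ℕ) : RR) + 1 := by rw [e2]; push_cast; ring
    have e4 : (X + (((m+1)-k : ℕ) : RR)) = (X + C 1 + ((m-k : ℕ) : RR)) := by rw [e3, C_1]; ring
    have e5 : (((m+1)-k:ℕ) : RR) * (((m+1).choose k : RR)) = (((m+1):ℕ) : RR) * (m.choose k : RR) := by
      rw [← Nat.cast_mul, ← Nat.cast_mul, choose_sub_mul]
    rw [e4, e2, pow_succ]
    calc (((m+1).choose k : RR)) * C (aP k) * ((X + C 1 + ((m-k : ℕ) : RR))^(m-k) * (X + C 1 + ((m-k : ℕ) : RR)))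
        = (((m+1).choose k : RR)) * C (aP k) * (X + C 1 + ((m-k : ℕ) : RR))^(m-k) * X
          + ((((m+1)-k:ℕ) : RR) * (((m+1).choose k : RR))) * (C (aP k) * (X + C 1 + ((m-k : ℕ) : RR))^(m-k)) := by
          rw [e3, C_1]; ring
      _ = _ := by rw [e5]; ring
  -- sum over range (m+2): peel top
  rw [Finset.sum_range_succ] at hA1
  have etop : (((m+1).choose (m+1) : RR)) * C (aP (m+1)) * (X + (((m+1)-(m+1) : ℕ) : RR))^((m+1)-(m+1))
      = C (aP (m+1)) := by simp
  rw [etop] at hA1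
  rw [Finset.sum_congr rfl hsplit, Finset.sum_add_distrib, ← Finset.mul_sum, hA2] at hA1
  -- peel bottom of the g1 sum
  rw [Finset.sum_range_succ'] at hA1
  have ebot : (((m+1).choose 0 : RR)) * C (aP 0) * (X + C 1 + ((m-0 : ℕ) : RR))^(m-0) * X
      = X * (X + (((m+1):ℕ):RR))^m := by
    have h0 : (C (aP 0) : RR) = 1 := by rw [show aP 0 = 1 from rfl, map_one]
    have h9 : (X + C 1 + ((m - 0:ℕ) : RR)) = (X + (((m+1):ℕ):RR)) := by
      rw [Nat.sub_zero, C_1]; push_cast; ring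
    rw [h0, h9]
    simp only [Nat.choose_zero_right, Nat.cast_one, Nat.sub_zero]
    ring
  rw [ebot] at hA1
  have eterm : ∀ j ∈ range m,
      (((m+1).choose (j+1) : RR)) * C (aP (j+1)) * (X + C 1 + ((m-(j+1) : ℕ) : RR))^(m-(j+1)) * X
      = (C X * X) * ((((m+1).choose (j+1) : RR)) * C ((X+((j+1:ℕ):SS))^j) * (X + ((m-j : ℕ):RR))^(m-j-1)) := by
    intro j hj
    have hjm : j < m := by simpa using hj
    have ea : aP (j+1) = X * (X + ((j+1:ℕ):SS))^j := by
      simp only [aP, if_neg (Nat.succ_ne_zero j), Nat.add_sub_cancel]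
    have eb : (X + C 1 + ((m-(j+1) : ℕ) : RR)) = (X + ((m-j : ℕ):RR)) := by
      rw [C_1, show m-j = (m-(j+1))+1 by omega]
      push_cast
      ring
    have ec : m-(j+1) = m-j-1 := by omega
    rw [ea, eb, ec, map_mul]
    ring
  rw [Finset.sum_congr rfl eterm, ← Finset.mul_sum] at hA1
  -- aP (m+1) image
  have eap : (C (aP (m+1)) : RR) = C X * (C X + (((m+1):ℕ):RR))^m := by
    have ea : aP (m+1) = X * (X + ((m+1:ℕ):SS))^m := by
      simp only [aP, if_neg (Nat.succ_ne_zero m), Nat.add_sub_cancel]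
    rw [ea, map_mul, map_pow, map_add, map_natCast]
  rw [eap] at hA1
  linear_combination hA1

lemma rhs_split (m : ℕ) :
    (X + C X + (((m+1):ℕ) : RR))^(m+1) - (((m+1):ℕ):RR) * (X + C X + (((m+1):ℕ):RR))^m
      - C X * (C X + (((m+1):ℕ):RR))^m - X * (X + (((m+1):ℕ):RR))^m
    = (C X * X : RR) * ∑ j ∈ range (m+1), ((m.choose j : RR)) * ((((m+1):ℕ):RR))^(m-j)
        * ∑ i ∈ Ico 1 (j+1), (((j+1).choose i : RR)) * (C X)^(i-1) * X^(j-i) := by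
  have binom : ∀ w : RR, w * (w + (((m+1):ℕ):RR))^m
      = ∑ j ∈ range (m+1), ((m.choose j : RR)) * ((((m+1):ℕ):RR))^(m-j) * w^(j+1) := by
    intro w
    rw [add_pow, Finset.mul_sum]
    exact Finset.sum_congr rfl (fun j _ => by rw [pow_succ]; ring)
  have e1 : (X + C X + (((m+1):ℕ) : RR))^(m+1) - (((m+1):ℕ):RR) * (X + C X + (((m+1):ℕ):RR))^m
      = (C X + X) * ((C X + X) + (((m+1):ℕ):RR))^m := by
    rw [pow_succ]
    have : (X + C X + (((m+1):ℕ) : RR)) = ((C X + X) + (((m+1):ℕ):RR)) := by ring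
    rw [this]
    ring
  rw [e1, binom (C X + X), binom (C X), binom X]
  rw [← Finset.sum_sub_distrib, ← Finset.sum_sub_distrib, Finset.mul_sum]
  refine Finset.sum_congr rfl (fun j _ => ?_)
  have hps := pow_add_split (j+1) (by omega) (C X : RR) X
  simp only [Nat.add_sub_cancel] at hps
  linear_combination (((m.choose j : RR)) * ((((m+1):ℕ):RR))^(m-j)) * hps

lemma Tkey (m : ℕ) :
    (∑ j ∈ range m, (((m+1).choose (j+1) : RR)) * C ((X+((j+1:ℕ):SS))^j) * (X + ((m-j : ℕ):RR))^(m-j-1))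
    = ∑ j ∈ range (m+1), ((m.choose j : RR)) * ((((m+1):ℕ):RR))^(m-j)
        * ∑ i ∈ Ico 1 (j+1), (((j+1).choose i : RR)) * (C X)^(i-1) * X^(j-i) := by
  have hne : (C X * X : RR) ≠ 0 :=
    mul_ne_zero (fun h => X_ne_zero ((map_eq_zero_iff C (C_injective)).mp h)) X_ne_zero
  exact mul_left_cancel₀ hne ((hurwitz_split m).trans (rhs_split m))

lemma main_int (m : ℕ) (hm : 1 ≤ m) :
    ∑ j ∈ range m, (((m+1).choose (j+1) : ℤ)) * (((j+1):ℕ) : ℤ)^j * (((m-j:ℕ)) : ℤ)^(m-j-1)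
      = 2 * m * (m+1)^(m-1) := by
  have h1 := congrArg (Polynomial.eval (0:SS)) (Tkey m)
  have h2 := congrArg (Polynomial.eval (0:ℤ)) h1
  simp only [eval_finset_sum, eval_mul, eval_pow, eval_add, eval_natCast, eval_X, eval_C,
    eval_zero, zero_add] at h2
  have inner : ∀ j : ℕ, ∑ i ∈ Ico 1 (j+1), (((j+1).choose i : ℤ)) * (0:ℤ)^(i-1) * (0:ℤ)^(j-i)
      = if j = 1 then 2 else 0 := by
    intro j
    match j with
    | 0 => simp
    | 1 => norm_num
    | (k+2) =>
      rw [if_neg (by omega)]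
      refine Finset.sum_eq_zero (fun i hi => ?_)
      simp only [Finset.mem_Ico] at hi
      rcases eq_or_ne i 1 with h | h
      · subst h
        rw [zero_pow (by omega : k+2-1 ≠ 0)]
        ring
      · rw [zero_pow (by omega : i-1 ≠ 0)]
        ring
  have h3 : ∑ x ∈ range (m+1), ((m.choose x : ℤ)) * (((m+1):ℕ) : ℤ)^(m-x)
        * ∑ i ∈ Ico 1 (x+1), (((x+1).choose i : ℤ)) * (0:ℤ)^(i-1) * (0:ℤ)^(x-i)
      = ∑ x ∈ range (m+1), (if x = 1 then ((m.choose x : ℤ)) * (((m+1):ℕ) : ℤ)^(m-x) * 2 else 0) := by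
    refine Finset.sum_congr rfl (fun j _ => ?_)
    rw [inner j, mul_ite, mul_zero]
  rw [h3, Finset.sum_ite_eq' (range (m+1)) 1] at h2
  rw [if_pos (by simp; omega : (1:ℕ) ∈ range (m+1)), Nat.choose_one_right] at h2
  rw [h2]
  push_cast
  ring

end CayleyAux

/-- Splitting probabilities of a uniform free (Cayley) tree sum to 1:
`∑_{k=1}^{n-1} C(n,k) k^{k-1} (n-k)^{n-k-1} = 2(n-1) n^{n-2}` for all `n ≥ 2`. -/
theorem sum_split_probabilities (n : ℕ) (hn : 2 ≤ n) :
    ∑ k ∈ Finset.Ico 1 n, n.choose k * k ^ (k - 1) * (n - k) ^ (n - k - 1)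
      = 2 * (n - 1) * n ^ (n - 2) := by
  obtain ⟨m, rfl⟩ : ∃ m, n = m+1 := ⟨n-1, by omega⟩
  have hm : 1 ≤ m := by omega
  have key := CayleyAux.main_int m hm
  apply @Nat.cast_injective ℤ
  rw [Nat.cast_sum]
  have lhs_eq : ∑ k ∈ Finset.Ico 1 (m+1), ((( (m+1).choose k * k ^ (k - 1) * ((m+1) - k) ^ ((m+1) - k - 1) : ℕ)) : ℤ)
      = ∑ j ∈ Finset.range m, ((((m+1).choose (j+1) : ℤ))) * (((j+1):ℕ) : ℤ)^j * (((m-j:ℕ)) : ℤ)^(m-j-1) := by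
    rw [Finset.sum_Ico_eq_sum_range]
    simp only [Nat.add_sub_cancel]
    refine Finset.sum_congr rfl (fun j hj => ?_)
    have hjm : j < m := by simpa using hj
    have e1 : 1 + j = j + 1 := by omega
    have e2 : (m+1) - (j+1) = m - j := by omega
    have e4 : (j+1) - 1 = j := by omega
    rw [e1, e2, e4]
    push_cast
    ring
  rw [lhs_eq, key]
  have : (m+1:ℕ) - 1 = m := by omega
  rw [this]
  have : (m+1:ℕ) - 2 = m - 1 := by omega
  rw [this]
  push_cast
  ring
end

section
/- For all n ≥ 2, with c_k = k^{k-1}/k!, one has ((n-1)/n) · c_n = (1/2) · ∑_{j=1}^{n-1} c_j c_{n-j}. -/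
open Nat

open Finset fwdDiff in
lemma fd_pow_zero : ∀ n : ℕ, ∀ m : ℕ, m < n → (fwdDiff (1:ℝ))^[n] (fun x : ℝ ↦ x ^ m) = fun _ ↦ 0 := by
  intro n
  induction n with
  | zero => intro m hm; omega
  | succ n IH =>
    intro m hm
    rw [Function.iterate_succ_apply]
    have h1 : fwdDiff (1:ℝ) (fun x : ℝ ↦ x ^ m)
        = ∑ j ∈ Finset.range m, (fun x : ℝ ↦ (m.choose j : ℝ) * x ^ j) := by
      funext x
      simp only [fwdDiff, Finset.sum_apply]
      rw [add_pow, Finset.sum_range_succ]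
      simp [mul_comm]
    rw [h1]
    rw [fwdDiff_iter_finset_sum]
    funext y
    simp only [Finset.sum_apply, Pi.zero_apply]
    apply Finset.sum_eq_zero
    intro j hj
    have : (fun x : ℝ ↦ (m.choose j : ℝ) * x ^ j) = (m.choose j : ℝ) • (fun x : ℝ ↦ x ^ j) := by
      funext x; simp [smul_eq_mul]
    rw [this, fwdDiff_iter_const_smul, IH j (by simp at hj; omega)]
    simp

lemma alt_sum (n m : ℕ) (hm : m < n) :
    ∑ k ∈ Finset.range (n + 1), (-1 : ℝ) ^ (n - k) * (n.choose k : ℝ) * (k : ℝ) ^ m = 0 := by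
  have h := fwdDiff_iter_eq_sum_shift (1:ℝ) (fun x : ℝ ↦ x ^ m) n 0
  rw [fd_pow_zero n m hm] at h
  have : (0:ℝ) = ∑ k ∈ Finset.range (n + 1),
      ((-1 : ℤ) ^ (n - k) * (n.choose k : ℤ)) • ((k:ℝ) ^ m) := by
    simpa using h
  rw [this]
  apply Finset.sum_congr rfl
  intro k hk
  rw [zsmul_eq_mul]
  push_cast
  ring

lemma choose_mul_sub (n k : ℕ) : (n+1).choose k * (n+1-k) = (n+1) * n.choose k := by
  rw [Nat.add_one_mul_choose_eq, ← Nat.choose_succ_right_eq]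

lemma three : ∀ n : ℕ, 1 ≤ n → ∀ y : ℝ,
    ∑ k ∈ Finset.Icc 1 n, (n.choose k : ℝ) * (k:ℝ)^(k-1) * (y + ((n-k : ℕ):ℝ))^(n-k)
      = n * (y + n)^(n-1) := by
  intro n hn
  induction n, hn using Nat.le_induction with
  | base => intro y; simp
  | succ n hn IH =>
    intro y
    set F : ℝ → ℝ := fun y ↦ (∑ k ∈ Finset.Icc 1 (n+1),
        ((n+1).choose k : ℝ) * (k:ℝ)^(k-1) * (y + ((n+1-k : ℕ):ℝ))^(n+1-k))
        - (n+1 : ℝ) * (y + (n+1 : ℕ))^n with hF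
    have hderiv : ∀ z : ℝ, HasDerivAt F 0 z := by
      intro z
      have hsum : HasDerivAt (fun y : ℝ ↦ ∑ k ∈ Finset.Icc 1 (n+1),
          ((n+1).choose k : ℝ) * (k:ℝ)^(k-1) * (y + ((n+1-k : ℕ):ℝ))^(n+1-k))
          (∑ k ∈ Finset.Icc 1 (n+1), ((n+1).choose k : ℝ) * (k:ℝ)^(k-1) *
            (((n+1-k : ℕ):ℝ) * (z + ((n+1-k : ℕ):ℝ))^(n+1-k-1))) z := by
        apply HasDerivAt.fun_sum
        intro k _
        have h1 : HasDerivAt (fun y : ℝ ↦ (y + ((n+1-k : ℕ):ℝ))^(n+1-k))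
            (((n+1-k:ℕ):ℝ) * (z + ((n+1-k : ℕ):ℝ))^(n+1-k-1) * 1) z :=
          ((hasDerivAt_id z).add_const _).pow _
        simpa [mul_assoc] using h1.const_mul (((n+1).choose k : ℝ) * (k:ℝ)^(k-1))
      have hrhs : HasDerivAt (fun y : ℝ ↦ (n+1 : ℝ) * (y + (n+1 : ℕ))^n)
          ((n+1 : ℝ) * ((n:ℝ) * (z + (n+1 : ℕ))^(n-1))) z := by
        have h1 : HasDerivAt (fun y : ℝ ↦ (y + ((n+1:ℕ):ℝ))^n)
            ((n:ℝ) * (z + ((n+1:ℕ):ℝ))^(n-1) * 1) z :=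
          ((hasDerivAt_id z).add_const _).pow _
        simpa [mul_assoc] using h1.const_mul ((n:ℝ)+1)
      have key : ∑ k ∈ Finset.Icc 1 (n+1), ((n+1).choose k : ℝ) * (k:ℝ)^(k-1) *
            (((n+1-k : ℕ):ℝ) * (z + ((n+1-k : ℕ):ℝ))^(n+1-k-1))
          = (n+1 : ℝ) * ((n:ℝ) * (z + (n+1 : ℕ))^(n-1)) := by
        rw [Finset.sum_Icc_succ_top (by omega : 1 ≤ n+1)]
        have htop : ((n+1).choose (n+1) : ℝ) * ((n+1:ℕ):ℝ)^(n+1-1) *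
            (((n+1-(n+1) : ℕ):ℝ) * (z + ((n+1-(n+1) : ℕ):ℝ))^(n+1-(n+1)-1)) = 0 := by
          simp
        rw [htop, add_zero]
        have hcongr : ∀ k ∈ Finset.Icc 1 n, ((n+1).choose k : ℝ) * (k:ℝ)^(k-1) *
            (((n+1-k : ℕ):ℝ) * (z + ((n+1-k : ℕ):ℝ))^(n+1-k-1))
            = ((n:ℝ)+1) * ((n.choose k : ℝ) * (k:ℝ)^(k-1) * ((z+1) + ((n-k : ℕ):ℝ))^(n-k)) := by
          intro k hk
          simp only [Finset.mem_Icc] at hk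
          have hk2 : k ≤ n := hk.2
          have e1 : n+1-k-1 = n-k := by omega
          have e2 : ((n+1-k : ℕ):ℝ) = ((n-k:ℕ):ℝ) + 1 := by
            rw [Nat.cast_sub (by omega), Nat.cast_sub hk2]; push_cast; ring
          have e3 : (((n+1).choose k : ℝ)) * ((n+1-k : ℕ):ℝ) = ((n:ℝ)+1) * (n.choose k : ℝ) := by
            have := choose_mul_sub n k
            exact_mod_cast congrArg (Nat.cast : ℕ → ℝ) this
          calc ((n+1).choose k : ℝ) * (k:ℝ)^(k-1) *
              (((n+1-k : ℕ):ℝ) * (z + ((n+1-k : ℕ):ℝ))^(n+1-k-1))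
              = (((n+1).choose k : ℝ) * ((n+1-k : ℕ):ℝ)) * ((k:ℝ)^(k-1) *
                (z + ((n+1-k : ℕ):ℝ))^(n+1-k-1)) := by ring
            _ = ((n:ℝ)+1) * ((n.choose k : ℝ) * (k:ℝ)^(k-1) * ((z+1) + ((n-k : ℕ):ℝ))^(n-k)) := by
                rw [e3, e1, e2]; ring_nf
        rw [Finset.sum_congr rfl hcongr, ← Finset.mul_sum, IH (z+1)]
        push_cast
        ring_nf
      have := hsum.sub hrhs
      rw [key, sub_self] at this
      exact this
    have hconst : F y = F (-((n:ℝ)+1)) :=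
      is_const_of_deriv_eq_zero (fun z ↦ (hderiv z).differentiableAt)
        (fun z ↦ (hderiv z).deriv) y _
    have hzero : F (-((n:ℝ)+1)) = 0 := by
      rw [hF]
      simp only
      have h2 : (n+1 : ℝ) * ((-((n:ℝ)+1)) + ((n+1 : ℕ):ℝ))^n = 0 := by
        push_cast
        rw [show (-((n:ℝ)+1)) + ((n:ℝ)+1) = 0 by ring, zero_pow (by omega)]
        ring
      have h1 : ∑ k ∈ Finset.Icc 1 (n+1), ((n+1).choose k : ℝ) * (k:ℝ)^(k-1) *
          ((-((n:ℝ)+1)) + ((n+1-k : ℕ):ℝ))^(n+1-k)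
          = ∑ k ∈ Finset.Icc 1 (n+1), (-1:ℝ)^(n+1-k) * ((n+1).choose k : ℝ) * (k:ℝ)^n := by
        apply Finset.sum_congr rfl
        intro k hk
        simp only [Finset.mem_Icc] at hk
        have e2 : ((n+1-k : ℕ):ℝ) = ((n:ℝ)+1) - (k:ℝ) := by
          rw [Nat.cast_sub (by omega)]; push_cast; ring
        rw [e2, show (-((n:ℝ)+1)) + (((n:ℝ)+1) - (k:ℝ)) = -(k:ℝ) by ring]
        rw [neg_pow]
        have : (k:ℝ)^(k-1) * ((k:ℝ)^(n+1-k)) = (k:ℝ)^n := by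
          rw [← pow_add]
          congr 1
          omega
        calc ((n+1).choose k : ℝ) * (k:ℝ)^(k-1) * ((-1:ℝ)^(n+1-k) * (k:ℝ)^(n+1-k))
            = (-1:ℝ)^(n+1-k) * ((n+1).choose k : ℝ) * ((k:ℝ)^(k-1) * (k:ℝ)^(n+1-k)) := by ring
          _ = (-1:ℝ)^(n+1-k) * ((n+1).choose k : ℝ) * (k:ℝ)^n := by rw [this]
      rw [h1, h2, sub_zero]
      have h3 := alt_sum (n+1) n (by omega)
      rw [show n+1+1 = n+2 by rfl] at h3
      have h4 : ∑ k ∈ Finset.range (n+2), (-1 : ℝ) ^ (n+1-k) * ((n+1).choose k : ℝ) * (k : ℝ) ^ n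
          = (-1:ℝ)^(n+1) * (((n+1).choose 0 : ℝ)) * ((0:ℕ):ℝ)^n
            + ∑ k ∈ Finset.Ico 1 (n+2), (-1 : ℝ) ^ (n+1-k) * ((n+1).choose k : ℝ) * (k : ℝ) ^ n := by
        rw [Finset.range_eq_Ico, Finset.sum_eq_sum_Ico_succ_bot (by omega)]
        norm_num
      rw [h4] at h3
      simp only [Nat.cast_zero, zero_pow (by omega : n ≠ 0), mul_zero, zero_add] at h3
      rw [← Finset.Ico_add_one_right_eq_Icc]
      exact h3
    rw [hF] at hconst
    simp only at hconst
    have := hconst.trans hzero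
    have h5 : ∑ k ∈ Finset.Icc 1 (n+1),
        ((n+1).choose k : ℝ) * (k:ℝ)^(k-1) * (y + ((n+1-k : ℕ):ℝ))^(n+1-k)
        = (n+1 : ℝ) * (y + ((n+1 : ℕ):ℝ))^n := by
      linarith [sub_eq_zero.mp this]
    push_cast at h5 ⊢
    convert h5 using 2

lemma threeZero (n : ℕ) (hn : 1 ≤ n) :
    ∑ k ∈ Finset.Icc 1 n, (n.choose k : ℝ) * (k:ℝ)^(k-1) * ((n-k : ℕ):ℝ)^(n-k)
      = (n:ℝ)^n := by
  have h := three n hn 0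
  simp only [zero_add] at h
  rw [h, mul_comm, ← pow_succ]
  congr 1
  omega


/-- Convolution identity for the tree-function coefficients `c k = k^{k-1}/k!`:
`((n-1)/n) c_n = (1/2) ∑_{j=1}^{n-1} c_j c_{n-j}` for all `n ≥ 2`. -/
theorem tree_coeff_convolution
    (c : ℕ → ℝ) (hc : ∀ k, c k = (k : ℝ) ^ (k - 1) / (k)!)
    (n : ℕ) (hn : 2 ≤ n) :
    ((n : ℝ) - 1) / (n : ℝ) * c n = (1 / 2) * ∑ j ∈ Finset.Ico 1 n, c j * c (n - j) := by
  set t : ℕ → ℝ := fun k ↦ (n.choose k : ℝ) * (k:ℝ)^(k-1) * ((n-k : ℕ):ℝ)^(n-k-1) with ht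
  have hD : ∑ k ∈ Finset.Ico 1 n, ((n-k : ℕ):ℝ) * t k = (n:ℝ)^n - (n:ℝ)^(n-1) := by
    have h0 := threeZero n (by omega)
    rw [← Finset.Ico_add_one_right_eq_Icc, Finset.sum_Ico_succ_top (by omega : 1 ≤ n)] at h0
    have htop : (n.choose n : ℝ) * (n:ℝ)^(n-1) * ((n-n : ℕ):ℝ)^(n-n) = (n:ℝ)^(n-1) := by simp
    rw [htop] at h0
    have hterm : ∀ k ∈ Finset.Ico 1 n, ((n-k : ℕ):ℝ) * t k
        = (n.choose k : ℝ) * (k:ℝ)^(k-1) * ((n-k : ℕ):ℝ)^(n-k) := by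
      intro k hk
      simp only [Finset.mem_Ico] at hk
      have e : ((n-k:ℕ):ℝ)^(n-k) = ((n-k:ℕ):ℝ)^(n-k-1) * ((n-k:ℕ):ℝ) := by
        rw [← pow_succ]; congr 1; omega
      rw [ht]
      simp only
      rw [e]
      ring
    rw [Finset.sum_congr rfl hterm]
    linarith
  have hD2 : ∑ k ∈ Finset.Ico 1 n, (k:ℝ) * t k
      = ∑ k ∈ Finset.Ico 1 n, ((n-k : ℕ):ℝ) * t k := by
    apply Finset.sum_nbij' (i := fun k ↦ n - k) (j := fun k ↦ n - k)
    · intro a ha; simp only [Finset.mem_Ico] at ha ⊢; omega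
    · intro a ha; simp only [Finset.mem_Ico] at ha ⊢; omega
    · intro a ha; simp only [Finset.mem_Ico] at ha; omega
    · intro a ha; simp only [Finset.mem_Ico] at ha; omega
    · intro k hk
      simp only [Finset.mem_Ico] at hk
      rw [ht]
      simp only
      rw [show n - (n - k) = k from by omega, Nat.choose_symm (by omega : k ≤ n)]
      ring
  have hsum : (n:ℝ) * ∑ k ∈ Finset.Ico 1 n, t k = 2 * ((n:ℝ)^n - (n:ℝ)^(n-1)) := by
    rw [Finset.mul_sum]
    have hsplit : ∀ k ∈ Finset.Ico 1 n, (n:ℝ) * t k = (k:ℝ) * t k + ((n-k:ℕ):ℝ) * t k := by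
      intro k hk; simp only [Finset.mem_Ico] at hk
      have : ((n-k:ℕ):ℝ) = (n:ℝ) - (k:ℝ) := by rw [Nat.cast_sub (by omega)]
      rw [this]; ring
    rw [Finset.sum_congr rfl hsplit, Finset.sum_add_distrib, hD2, hD]; ring
  have hcv : ∀ j ∈ Finset.Ico 1 n, c j * c (n-j) = t j / ((n)! : ℝ) := by
    intro j hj; simp only [Finset.mem_Ico] at hj
    rw [hc j, hc (n-j), ht]
    simp only
    have hfacR : (n.choose j : ℝ) * ((j)! : ℝ) * (((n-j))! : ℝ) = ((n)! : ℝ) := by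
      exact_mod_cast congrArg (Nat.cast : ℕ → ℝ)
        (Nat.choose_mul_factorial_mul_factorial (le_of_lt hj.2))
    have h1 : ((j)! : ℝ) ≠ 0 := by positivity
    have h2 : (((n-j))! : ℝ) ≠ 0 := by positivity
    have h3 : ((n)! : ℝ) ≠ 0 := by positivity
    field_simp
    rw [← hfacR]
    ring
  rw [Finset.sum_congr rfl hcv, ← Finset.sum_div, hc n]
  have hn0 : (n:ℝ) ≠ 0 := by
    simp only [ne_eq, Nat.cast_eq_zero]; omega
  have h3 : ((n)! : ℝ) ≠ 0 := by positivity
  have hpow : (n:ℝ)^n = (n:ℝ)^(n-1) * n := by rw [← pow_succ]; congr 1; omega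
  rw [hpow] at hsum
  field_simp
  linear_combination (-1 : ℝ) * hsum
end

section
/- Define the sequence (A_k)_{k≥1} by A_1 = 2^{-3/2} and, for k ≥ 2, A_k = ∑_{j=1}^{k-1} C(k,j) A_j A_{k-j} / 2 + k A_{k-1} Γ(5k/2 - 1)/Γ(5k/2 - 3). Then there exists a constant C < ∞ such that |A_k / k!| ≤ C^k k^{5k/2} for all k ≥ 1. -/
open Nat

-- term bound lemma
private lemma mcgb_term_bound (k j : ℕ) (hj1 : 1 ≤ j) (hjk : j < k) (a b : ℝ)
    (ha : |a| ≤ 13 ^ j * (j : ℝ) ^ (5 * (j : ℝ) / 2 - 2) * (j)!)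
    (hb : |b| ≤ 13 ^ (k - j) * ((k - j : ℕ) : ℝ) ^ (5 * ((k - j : ℕ) : ℝ) / 2 - 2) * ((k - j))!) :
    |(k.choose j : ℝ) * a * b / 2| ≤ 13 ^ k * (k : ℝ) ^ (5 * (k : ℝ) / 2 - 4) * (k)! / 2 := by
  have hjR : (1 : ℝ) ≤ (j : ℝ) := by exact_mod_cast hj1
  have hkjn : 1 ≤ k - j := by omega
  have hkjR : (1 : ℝ) ≤ ((k - j : ℕ) : ℝ) := by exact_mod_cast hkjn
  have hcast : ((k - j : ℕ) : ℝ) = (k : ℝ) - (j : ℝ) := by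
    push_cast [Nat.cast_sub hjk.le]; ring
  have hkR : (1 : ℝ) ≤ (k : ℝ) := by
    have : (1:ℕ) ≤ k := by omega
    exact_mod_cast this
  have hkpos : (0:ℝ) < k := by linarith
  -- rpow bounds
  have h1 : (j : ℝ) ^ (5 * (j : ℝ) / 2 - 2) ≤ (k : ℝ) ^ (5 * (j : ℝ) / 2 - 2) := by
    apply Real.rpow_le_rpow (by linarith) (by exact_mod_cast hjk.le) (by linarith)
  have h2 : ((k - j : ℕ) : ℝ) ^ (5 * ((k - j : ℕ) : ℝ) / 2 - 2) ≤ (k : ℝ) ^ (5 * ((k - j : ℕ) : ℝ) / 2 - 2) := by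
    apply Real.rpow_le_rpow (by linarith)
    · have : k - j ≤ k := by omega
      exact_mod_cast this
    · linarith
  have hmul : (k : ℝ) ^ (5 * (j : ℝ) / 2 - 2) * (k : ℝ) ^ (5 * ((k - j : ℕ) : ℝ) / 2 - 2)
      = (k : ℝ) ^ (5 * (k : ℝ) / 2 - 4) := by
    rw [← Real.rpow_add hkpos]
    congr 1
    rw [hcast]; ring
  -- factorial identity
  have hfact : ((k.choose j : ℕ) : ℝ) * (j)! * ((k - j))! = ((k)! : ℝ) := by
    have := Nat.choose_mul_factorial_mul_factorial hjk.le
    exact_mod_cast this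
  have hanneg : (0:ℝ) ≤ |a| := abs_nonneg a
  have hbnneg : (0:ℝ) ≤ |b| := abs_nonneg b
  have hBj : (0:ℝ) ≤ 13 ^ j * (j : ℝ) ^ (5 * (j : ℝ) / 2 - 2) * (j)! := by positivity
  have habs : |(k.choose j : ℝ) * a * b / 2| = (k.choose j : ℝ) * |a| * |b| / 2 := by
    rw [abs_div, abs_mul, abs_mul, Nat.abs_cast]
    norm_num
  rw [habs]
  have key : (k.choose j : ℝ) * |a| * |b|
      ≤ (k.choose j : ℝ) * (13 ^ j * (j : ℝ) ^ (5 * (j : ℝ) / 2 - 2) * (j)!)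
        * (13 ^ (k - j) * ((k - j : ℕ) : ℝ) ^ (5 * ((k - j : ℕ) : ℝ) / 2 - 2) * ((k - j))!) := by
    apply mul_le_mul _ hb hbnneg (by positivity)
    exact mul_le_mul_of_nonneg_left ha (by positivity)
  have key2 : (k.choose j : ℝ) * (13 ^ j * (j : ℝ) ^ (5 * (j : ℝ) / 2 - 2) * (j)!)
        * (13 ^ (k - j) * ((k - j : ℕ) : ℝ) ^ (5 * ((k - j : ℕ) : ℝ) / 2 - 2) * ((k - j))!)
      ≤ 13 ^ k * (k : ℝ) ^ (5 * (k : ℝ) / 2 - 4) * (k)! := by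
    have hpowsplit : (13:ℝ) ^ j * 13 ^ (k - j) = 13 ^ k := by
      rw [← pow_add]; congr 1; omega
    calc (k.choose j : ℝ) * (13 ^ j * (j : ℝ) ^ (5 * (j : ℝ) / 2 - 2) * (j)!)
        * (13 ^ (k - j) * ((k - j : ℕ) : ℝ) ^ (5 * ((k - j : ℕ) : ℝ) / 2 - 2) * ((k - j))!)
        = (13 ^ j * 13 ^ (k-j)) * ((j : ℝ) ^ (5 * (j : ℝ) / 2 - 2) * ((k - j : ℕ) : ℝ) ^ (5 * ((k - j : ℕ) : ℝ) / 2 - 2))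
          * ((k.choose j : ℝ) * (j)! * ((k - j))!) := by ring
      _ ≤ (13 ^ j * 13 ^ (k-j)) * ((k : ℝ) ^ (5 * (j : ℝ) / 2 - 2) * (k : ℝ) ^ (5 * ((k - j : ℕ) : ℝ) / 2 - 2))
          * ((k.choose j : ℝ) * (j)! * ((k - j))!) := by
        apply mul_le_mul_of_nonneg_right _ (by positivity)
        apply mul_le_mul_of_nonneg_left _ (by positivity)
        exact mul_le_mul h1 h2 (by positivity) (by positivity)
      _ = 13 ^ k * (k : ℝ) ^ (5 * (k : ℝ) / 2 - 4) * (k)! := by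
        rw [hmul, hpowsplit, hfact]
  linarith


private lemma mcgb_key (A : ℕ → ℝ) (hA1 : A 1 = 2 ^ (-(3 : ℝ) / 2))
    (hArec : ∀ k : ℕ, 2 ≤ k → A k =
      (∑ j ∈ Finset.Ico 1 k, (k.choose j : ℝ) * A j * A (k - j) / 2)
        + (k : ℝ) * A (k - 1) *
          (Real.Gamma (5 * (k : ℝ) / 2 - 1) / Real.Gamma (5 * (k : ℝ) / 2 - 3))) :
    ∀ k : ℕ, 1 ≤ k → |A k| ≤ 13 ^ k * (k : ℝ) ^ (5 * (k : ℝ) / 2 - 2) * (k)! := by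
  intro k
  induction k using Nat.strong_induction_on with
  | _ k ih =>
  intro hk1
  rcases eq_or_lt_of_le hk1 with h1 | hk2
  · -- k = 1
    subst h1
    simp only [Nat.cast_one, hA1, factorial_one, Nat.cast_one, mul_one, pow_one]
    rw [Real.one_rpow, mul_one]
    have h0 : (2:ℝ) ^ (-(3:ℝ)/2) ≤ 1 :=
      Real.rpow_le_one_of_one_le_of_nonpos one_le_two (by norm_num)
    have hpos : (0:ℝ) < (2:ℝ) ^ (-(3:ℝ)/2) := Real.rpow_pos_of_pos two_pos _
    rw [abs_of_pos hpos]
    linarith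
  · -- 2 ≤ k
    have hk2' : 2 ≤ k := hk2
    have hkR : (2:ℝ) ≤ (k:ℝ) := by exact_mod_cast hk2'
    have hk1R : (1:ℝ) ≤ (k:ℝ) := by linarith
    have hkpos : (0:ℝ) < (k:ℝ) := by linarith
    set x : ℝ := 5 * (k:ℝ) / 2 - 3 with hxdef
    have hxpos : 0 < x := by rw [hxdef]; linarith
    -- Gamma ratio
    have hg : Real.Gamma (5 * (k:ℝ) / 2 - 1) / Real.Gamma (5 * (k:ℝ) / 2 - 3) = (x + 1) * x := by
      have e1 : 5 * (k:ℝ) / 2 - 1 = (x + 1) + 1 := by rw [hxdef]; ring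
      have e2 : 5 * (k:ℝ) / 2 - 3 = x := by rw [hxdef]
      rw [e1, e2, Real.Gamma_add_one (by linarith), Real.Gamma_add_one hxpos.ne']
      have hΓ := (Real.Gamma_pos_of_pos hxpos).ne'
      field_simp
    have hratpos : 0 < (x + 1) * x := by positivity
    -- sum bound
    have hsum : |∑ j ∈ Finset.Ico 1 k, (k.choose j : ℝ) * A j * A (k - j) / 2|
        ≤ (k - 1 : ℝ) * (13 ^ k * (k : ℝ) ^ (5 * (k : ℝ) / 2 - 4) * (k)! / 2) := by
      calc |∑ j ∈ Finset.Ico 1 k, (k.choose j : ℝ) * A j * A (k - j) / 2|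
          ≤ ∑ j ∈ Finset.Ico 1 k, |(k.choose j : ℝ) * A j * A (k - j) / 2| :=
            Finset.abs_sum_le_sum_abs _ _
        _ ≤ ∑ j ∈ Finset.Ico 1 k, (13 ^ k * (k : ℝ) ^ (5 * (k : ℝ) / 2 - 4) * (k)! / 2) := by
            apply Finset.sum_le_sum
            intro j hj
            rw [Finset.mem_Ico] at hj
            obtain ⟨hj1, hjk⟩ := hj
            have hkj1 : 1 ≤ k - j := by omega
            have hkjk : k - j < k := by omega
            exact mcgb_term_bound k j hj1 hjk (A j) (A (k - j))
              (ih j hjk hj1) (ih (k - j) hkjk hkj1)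
        _ = (k - 1 : ℝ) * (13 ^ k * (k : ℝ) ^ (5 * (k : ℝ) / 2 - 4) * (k)! / 2) := by
            rw [Finset.sum_const, Nat.card_Ico, nsmul_eq_mul]
            congr 1
            push_cast [Nat.cast_sub hk1]
            ring
    -- bound the sum further
    have hsum2 : (k - 1 : ℝ) * (13 ^ k * (k : ℝ) ^ (5 * (k : ℝ) / 2 - 4) * (k)! / 2)
        ≤ (1/2) * (13 ^ k * (k : ℝ) ^ (5 * (k : ℝ) / 2 - 2) * (k)!) := by
      have hk14 : (k:ℝ) * (k : ℝ) ^ (5 * (k : ℝ) / 2 - 4) = (k : ℝ) ^ (5 * (k : ℝ) / 2 - 3) := by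
        nth_rewrite 1 [← Real.rpow_one (k:ℝ)]
        rw [← Real.rpow_add hkpos]
        ring_nf
      have hmono : (k : ℝ) ^ (5 * (k : ℝ) / 2 - 3) ≤ (k : ℝ) ^ (5 * (k : ℝ) / 2 - 2) :=
        Real.rpow_le_rpow_of_exponent_le hk1R (by linarith)
      have hstep : (k - 1 : ℝ) * (k : ℝ) ^ (5 * (k : ℝ) / 2 - 4)
          ≤ (k : ℝ) ^ (5 * (k : ℝ) / 2 - 2) := by
        have h0 : (0:ℝ) ≤ (k : ℝ) ^ (5 * (k : ℝ) / 2 - 4) := Real.rpow_nonneg hkpos.le _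
        nlinarith [Real.rpow_nonneg hkpos.le (5 * (k : ℝ) / 2 - 3)]
      have hfpos : (0:ℝ) < ((k)! : ℝ) := by exact_mod_cast Nat.factorial_pos k
      have h13 : (0:ℝ) < (13:ℝ)^k := by positivity
      calc (k - 1 : ℝ) * (13 ^ k * (k : ℝ) ^ (5 * (k : ℝ) / 2 - 4) * (k)! / 2)
          = ((k-1:ℝ) * (k : ℝ) ^ (5 * (k : ℝ) / 2 - 4)) * (13 ^ k * (k)!) / 2 := by ring
        _ ≤ (k : ℝ) ^ (5 * (k : ℝ) / 2 - 2) * (13 ^ k * (k)!) / 2 := by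
            have := mul_le_mul_of_nonneg_right hstep
              (show (0:ℝ) ≤ 13 ^ k * (k)! by positivity)
            linarith
        _ = (1/2) * (13 ^ k * (k : ℝ) ^ (5 * (k : ℝ) / 2 - 2) * (k)!) := by ring
    -- second term bound
    have hkm1 : 1 ≤ k - 1 := by omega
    have hkm1lt : k - 1 < k := by omega
    have ihm := ih (k - 1) hkm1lt hkm1
    have hcast1 : ((k - 1 : ℕ) : ℝ) = (k : ℝ) - 1 := by
      push_cast [Nat.cast_sub hk1]; ring
    have hb1 : ((k - 1 : ℕ) : ℝ) ^ (5 * ((k - 1 : ℕ) : ℝ) / 2 - 2)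
        ≤ (k : ℝ) ^ (5 * ((k - 1 : ℕ) : ℝ) / 2 - 2) :=
      Real.rpow_le_rpow (by rw [hcast1]; linarith) (by rw [hcast1]; linarith)
        (by rw [hcast1]; linarith)
    have hrat2 : (x + 1) * x ≤ 25 / 4 * (k : ℝ) ^ (2:ℕ) := by
      rw [hxdef]; nlinarith
    have hfpos : (0:ℝ) < ((k)! : ℝ) := by exact_mod_cast Nat.factorial_pos k
    have hkfact : (k : ℝ) * (((k - 1))! : ℝ) = ((k)! : ℝ) := by
      exact_mod_cast Nat.mul_factorial_pred (by omega : k ≠ 0)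
    have hE2 : (k : ℝ) ^ (5 * ((k - 1 : ℕ) : ℝ) / 2 - 2) * (k : ℝ) ^ (2:ℕ)
        = (k : ℝ) ^ (5 * (k : ℝ) / 2 - 5 / 2) := by
      rw [← Real.rpow_natCast (k:ℝ) 2, ← Real.rpow_add hkpos]
      congr 1
      rw [hcast1]
      push_cast
      ring
    have hEle : (k : ℝ) ^ (5 * (k : ℝ) / 2 - 5 / 2) ≤ (k : ℝ) ^ (5 * (k : ℝ) / 2 - 2) :=
      Real.rpow_le_rpow_of_exponent_le hk1R (by linarith)
    have h13 : (13:ℝ) ^ (k - 1) * 13 = 13 ^ k := by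
      rw [← pow_succ]; congr 1; omega
    have hT : |(k : ℝ) * A (k - 1) * (Real.Gamma (5 * (k:ℝ) / 2 - 1) / Real.Gamma (5 * (k:ℝ) / 2 - 3))|
        ≤ (25 / 52) * (13 ^ k * (k : ℝ) ^ (5 * (k : ℝ) / 2 - 2) * (k)!) := by
      rw [hg, abs_mul, abs_mul, Nat.abs_cast, abs_of_pos hratpos]
      calc (k : ℝ) * |A (k - 1)| * ((x + 1) * x)
          ≤ (k : ℝ) * (13 ^ (k - 1) * ((k - 1 : ℕ) : ℝ) ^ (5 * ((k - 1 : ℕ) : ℝ) / 2 - 2) * ((k - 1))!)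
            * (25 / 4 * (k : ℝ) ^ (2:ℕ)) := by
            apply mul_le_mul _ hrat2 hratpos.le (by positivity)
            exact mul_le_mul_of_nonneg_left ihm hkpos.le
        _ ≤ (k : ℝ) * (13 ^ (k - 1) * (k : ℝ) ^ (5 * ((k - 1 : ℕ) : ℝ) / 2 - 2) * ((k - 1))!)
            * (25 / 4 * (k : ℝ) ^ (2:ℕ)) := by
            gcongr
        _ = (25 / 4) * 13 ^ (k - 1)
            * ((k : ℝ) ^ (5 * ((k - 1 : ℕ) : ℝ) / 2 - 2) * (k : ℝ) ^ (2:ℕ))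
            * ((k : ℝ) * ((k - 1))!) := by ring
        _ = (25 / 4) * 13 ^ (k - 1) * (k : ℝ) ^ (5 * (k : ℝ) / 2 - 5 / 2) * (k)! := by
            rw [hE2, hkfact]
        _ ≤ (25 / 4) * 13 ^ (k - 1) * (k : ℝ) ^ (5 * (k : ℝ) / 2 - 2) * (k)! := by
            gcongr
        _ = (25 / 52) * (13 ^ k * (k : ℝ) ^ (5 * (k : ℝ) / 2 - 2) * (k)!) := by
            rw [← h13]; ring
    -- combine
    have hM : (0:ℝ) ≤ 13 ^ k * (k : ℝ) ^ (5 * (k : ℝ) / 2 - 2) * (k)! := by positivity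
    rw [hArec k hk2']
    calc |(∑ j ∈ Finset.Ico 1 k, (k.choose j : ℝ) * A j * A (k - j) / 2)
          + (k : ℝ) * A (k - 1) * (Real.Gamma (5 * (k:ℝ) / 2 - 1) / Real.Gamma (5 * (k:ℝ) / 2 - 3))|
        ≤ |∑ j ∈ Finset.Ico 1 k, (k.choose j : ℝ) * A j * A (k - j) / 2|
          + |(k : ℝ) * A (k - 1) * (Real.Gamma (5 * (k:ℝ) / 2 - 1) / Real.Gamma (5 * (k:ℝ) / 2 - 3))| :=
          abs_add_le _ _
      _ ≤ 13 ^ k * (k : ℝ) ^ (5 * (k : ℝ) / 2 - 2) * (k)! := by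
          have := hsum.trans hsum2
          linarith

/-- For the sequence `A_1 = 2^{-3/2}`,
`A_k = ∑_{j=1}^{k-1} C(k,j) A_j A_{k-j}/2 + k A_{k-1} Γ(5k/2-1)/Γ(5k/2-3)`,
there is a constant `C` with `|A_k/k!| ≤ C^k k^{5k/2}` for all `k ≥ 1`. -/
theorem moment_coefficient_growth_bound
    (A : ℕ → ℝ) (hA1 : A 1 = 2 ^ (-(3 : ℝ) / 2))
    (hArec : ∀ k : ℕ, 2 ≤ k → A k =
      (∑ j ∈ Finset.Ico 1 k, (k.choose j : ℝ) * A j * A (k - j) / 2)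
        + (k : ℝ) * A (k - 1) *
          (Real.Gamma (5 * (k : ℝ) / 2 - 1) / Real.Gamma (5 * (k : ℝ) / 2 - 3))) :
    ∃ C : ℝ, ∀ k : ℕ, 1 ≤ k → |A k / (k)!| ≤ C ^ k * (k : ℝ) ^ (5 * (k : ℝ) / 2) := by
  refine ⟨13, fun k hk => ?_⟩
  have hkey := mcgb_key A hA1 hArec k hk
  have hk1R : (1:ℝ) ≤ (k:ℝ) := by exact_mod_cast hk
  have hfpos : (0:ℝ) < ((k)! : ℝ) := by exact_mod_cast Nat.factorial_pos k
  have hmono : (k : ℝ) ^ (5 * (k : ℝ) / 2 - 2) ≤ (k : ℝ) ^ (5 * (k : ℝ) / 2) :=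
    Real.rpow_le_rpow_of_exponent_le hk1R (by linarith)
  rw [abs_div, Nat.abs_cast, div_le_iff₀ hfpos]
  calc |A k| ≤ 13 ^ k * (k : ℝ) ^ (5 * (k : ℝ) / 2 - 2) * (k)! := hkey
    _ ≤ 13 ^ k * (k : ℝ) ^ (5 * (k : ℝ) / 2) * (k)! := by gcongr
end
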